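/- Let Alg be the local search algorithm for the (k,λ)-maxCGIS problem characterized by a list R = (r_1,…,r_m) of improvement rules. If every improvement rule in R is loyal and INPA, then Alg is INPA. -/

import Mathlib

/-!
The `(k,λ)`-maxCGIS framework of Emek–Shpiro, "Barter Exchange with Bounded Trading
Cycles".  A potential node over `[n]` is a cyclic order of between `2` and `k` distinct
agents, formalized as a cyclic permutation of `Fin n` whose support has size in `[2,k]`;
its agent set `α(c)` is the support.  A `k`-cycle graph is identified with a finite set
of potential nodes, two distinct nodes being adjacent iff their agent sets intersect,
and `G[V∖S]` is the graph on node set `V ∖ S`.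
-/

open Finset

namespace MaxCGIS

/-- A potential node over `[n]` with length bound `k`: a cyclic order of between `2`
and `k` distinct agents of `[n]`. -/
def Node (n k : ℕ) : Type :=
  {σ : Equiv.Perm (Fin n) // σ.IsCycle ∧ 2 ≤ σ.support.card ∧ σ.support.card ≤ k}

instance {n k : ℕ} : DecidableEq (Node n k) := Subtype.instDecidableEq

/-- The agent set `α(c)` of a node. -/
def alpha {n k : ℕ} (c : Node n k) : Finset (Fin n) := c.val.support

/-- `α(I) = ⋃_{v∈I} α(v)`. -/
def aset {n k : ℕ} (I : Finset (Node n k)) : Finset (Fin n) := I.biUnion alpha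

/-- Independent set: pairwise non-adjacent nodes, i.e., pairwise disjoint agent sets. -/
def Indep {n k : ℕ} (I : Finset (Node n k)) : Prop :=
  ∀ u ∈ I, ∀ v ∈ I, u ≠ v → alpha u ∩ alpha v = ∅

instance {n k : ℕ} (I : Finset (Node n k)) : Decidable (Indep I) :=
  inferInstanceAs (Decidable (∀ u ∈ I, ∀ v ∈ I, u ≠ v → alpha u ∩ alpha v = ∅))

/-- The utility of agent `i` from an independent set `I` under the length function
`lam`: `lam |α(v)|` if `I ∩ α⁻¹(i) = {v}`, and `0` if `I ∩ α⁻¹(i) = ∅` (for an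
independent set, at most one node of `I` contains `i`). -/
noncomputable def util {n k : ℕ} (lam : ℕ → ℝ) (i : Fin n) (I : Finset (Node n k)) : ℝ :=
  ∑ v ∈ I.filter (fun v => i ∈ alpha v), lam (alpha v).card

/-- The weight `w(I) = ∑_{v∈I} |α(v)|·λ(|α(v)|)`. -/
noncomputable def wt {n k : ℕ} (lam : ℕ → ℝ) (I : Finset (Node n k)) : ℝ :=
  ∑ v ∈ I, ((alpha v).card : ℝ) * lam (alpha v).card

/-- A length function for length bound `k`: a non-increasing map `{2,…,k} → (0,1]`. -/
def IsLengthFunction (k : ℕ) (lam : ℕ → ℝ) : Prop :=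
  (∀ ℓ : ℕ, 2 ≤ ℓ → ℓ ≤ k → 0 < lam ℓ ∧ lam ℓ ≤ 1) ∧
    ∀ ℓ ℓ' : ℕ, 2 ≤ ℓ → ℓ ≤ ℓ' → ℓ' ≤ k → lam ℓ' ≤ lam ℓ

/-- A `(k,λ)`-maxCGIS algorithm assigns an output node set to every number of agents
`n` and every `k`-cycle graph (i.e., finite set of potential nodes) over `n` agents. -/
abbrev Algorithm (k : ℕ) : Type :=
  (n : ℕ) → Finset (Node n k) → Finset (Node n k)

/-- A valid algorithm outputs an independent set of the input graph. -/
def IsAlgorithm {k : ℕ} (Alg : Algorithm k) : Prop :=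
  ∀ (n : ℕ) (G : Finset (Node n k)), Alg n G ⊆ G ∧ Indep (Alg n G)

/-- Truthfulness: no agent `i` can increase her utility by hiding a set `S ⊆ α⁻¹(i)`
of nodes she partakes in. -/
def TruthfulAlg {k : ℕ} (lam : ℕ → ℝ) (Alg : Algorithm k) : Prop :=
  ∀ (n : ℕ) (G : Finset (Node n k)) (i : Fin n) (S : Finset (Node n k)),
    (∀ v ∈ S, i ∈ alpha v) →
      util lam i (Alg n (G \ S)) ≤ util lam i (Alg n G)

/-- INPA (independence of non-partaking agents): if agent `i` does not partake in the
output on `G`, then removing any set `S ⊆ α⁻¹(i)` of nodes does not change the output. -/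
def INPAAlg {k : ℕ} (Alg : Algorithm k) : Prop :=
  ∀ (n : ℕ) (G : Finset (Node n k)) (i : Fin n),
    i ∉ aset (Alg n G) →
      ∀ S : Finset (Node n k), (∀ v ∈ S, i ∈ alpha v) →
        Alg n (G \ S) = Alg n G

/-- `Alg` admits approximation ratio `r ≥ 1` for the `(k,λ)`-maxCGIS problem. -/
def ApproxAlg {k : ℕ} (lam : ℕ → ℝ) (Alg : Algorithm k) (r : ℝ) : Prop :=
  1 ≤ r ∧
    ∀ (n : ℕ) (G I : Finset (Node n k)), I ⊆ G → Indep I →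
      wt lam (Alg n G) ≥ (1 / r) * wt lam I

/-- An improvement rule maps a pair (graph, independent set) either to an improved
independent set or to `⊥` (here `none`). -/
abbrev Rule (k : ℕ) : Type :=
  (n : ℕ) → Finset (Node n k) → Finset (Node n k) → Option (Finset (Node n k))

/-- A valid improvement rule: on any independent set `I` of `G`, if it returns `I′`
then `I′` is an independent set of `G` of strictly larger weight. -/
def ValidRule {k : ℕ} (lam : ℕ → ℝ) (r : Rule k) : Prop :=
  ∀ (n : ℕ) (G I : Finset (Node n k)), I ⊆ G → Indep I →
    ∀ I' : Finset (Node n k), r n G I = some I' →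
      I' ⊆ G ∧ Indep I' ∧ wt lam I < wt lam I'

/-- Loyal: every agent partaking in `I` also partakes in the improved set. -/
def LoyalRule {k : ℕ} (r : Rule k) : Prop :=
  ∀ (n : ℕ) (G I I' : Finset (Node n k)), r n G I = some I' → aset I ⊆ aset I'

/-- INPA improvement rule: (1) if `r(G,I) = I′` then `r(G[V∖S], I) = I′` for every
agent `i ∉ α(I) ∪ α(I′)` and every `S ⊆ α⁻¹(i)`; (2) if `r(G,I) = ⊥` then
`r(G[V∖S], I) = ⊥` for every agent `i ∉ α(I)` and every `S ⊆ α⁻¹(i)`. -/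
def INPARule {k : ℕ} (r : Rule k) : Prop :=
  (∀ (n : ℕ) (G I I' : Finset (Node n k)) (i : Fin n) (S : Finset (Node n k)),
      r n G I = some I' → i ∉ aset I → i ∉ aset I' → (∀ v ∈ S, i ∈ alpha v) →
        r n (G \ S) I = some I') ∧
  (∀ (n : ℕ) (G I : Finset (Node n k)) (i : Fin n) (S : Finset (Node n k)),
      r n G I = none → i ∉ aset I → (∀ v ∈ S, i ∈ alpha v) →
        r n (G \ S) I = none)

/-- `Alg` is the local search algorithm characterized by the list `R` of improvement
rules: on every graph `G` its output is the end of the iterative process that starts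
from `∅` and repeatedly applies the first applicable rule of `R`, halting when no rule
applies. -/
def IsLocalSearch {k : ℕ} (R : List (Rule k)) (Alg : Algorithm k) : Prop :=
  ∀ (n : ℕ) (G : Finset (Node n k)),
    ∃ (T : ℕ) (seq : ℕ → Finset (Node n k)),
      seq 0 = ∅ ∧
      (∀ t : ℕ, t < T → R.findSome? (fun r => r n G (seq t)) = some (seq (t + 1))) ∧
      R.findSome? (fun r => r n G (seq T)) = none ∧
      Alg n G = seq T

/-- Transfer of `findSome? = none` from `G` to `G \ S`. -/
lemma findSome?_none_transfer {k : ℕ} (R : List (Rule k))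
    (hinpa : ∀ r ∈ R, INPARule r) {n : ℕ} (G I : Finset (Node n k)) (i : Fin n)
    (S : Finset (Node n k)) (hI : i ∉ aset I) (hS : ∀ v ∈ S, i ∈ alpha v)
    (h : R.findSome? (fun r => r n G I) = none) :
    R.findSome? (fun r => r n (G \ S) I) = none := by
  rw [List.findSome?_eq_none_iff] at h ⊢
  intro r hr
  exact (hinpa r hr).2 n G I i S (h r hr) hI hS

/-- Transfer of `findSome? = some I'` from `G` to `G \ S`. -/
lemma findSome?_some_transfer {k : ℕ} (R : List (Rule k))
    (hinpa : ∀ r ∈ R, INPARule r) {n : ℕ} (G I I' : Finset (Node n k)) (i : Fin n)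
    (S : Finset (Node n k)) (hI : i ∉ aset I) (hI' : i ∉ aset I')
    (hS : ∀ v ∈ S, i ∈ alpha v)
    (h : R.findSome? (fun r => r n G I) = some I') :
    R.findSome? (fun r => r n (G \ S) I) = some I' := by
  induction R with
  | nil => simp at h
  | cons r rs ih =>
    rw [List.findSome?_cons] at h ⊢
    cases hr : r n G I with
    | none =>
      rw [hr] at h
      rw [(hinpa r List.mem_cons_self).2 n G I i S hr hI hS]
      exact ih (fun r hr => hinpa r (List.mem_cons_of_mem _ hr)) h
    | some J =>
      rw [hr] at h
      obtain rfl : J = I' := by simpa using h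
      rw [(hinpa r List.mem_cons_self).1 n G I J i S hr hI hI' hS]

/-- Lemma: local search with loyal INPA rules is INPA.
If every improvement rule in `R` is (a valid improvement rule that is) loyal and INPA,
then the local search algorithm characterized by `R` is INPA. -/
theorem localSearch_inpa
    (k : ℕ) (hk : 2 ≤ k) (lam : ℕ → ℝ) (hlam : IsLengthFunction k lam)
    (R : List (Rule k))
    (hvalid : ∀ r ∈ R, ValidRule lam r)
    (hloyal : ∀ r ∈ R, LoyalRule r)
    (hinpa : ∀ r ∈ R, INPARule r)
    (Alg : Algorithm k) (hAlg : IsLocalSearch R Alg) :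
    INPAAlg Alg := by
  intro n G i hi S hS
  obtain ⟨T, seq, h0, hstep, hhalt, hout⟩ := hAlg n G
  obtain ⟨T', seq', h0', hstep', hhalt', hout'⟩ := hAlg n (G \ S)
  -- monotonicity of agent sets along the sequence
  have step_sub : ∀ t < T, aset (seq t) ⊆ aset (seq (t + 1)) := by
    intro t ht
    obtain ⟨r, hrR, hr⟩ := List.exists_of_findSome?_eq_some (hstep t ht)
    exact hloyal r hrR n G _ _ hr
  have mono : ∀ b ≤ T, ∀ a ≤ b, aset (seq a) ⊆ aset (seq b) := by
    intro b
    induction b with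
    | zero =>
      intro _ a ha
      have : a = 0 := Nat.le_zero.mp ha
      subst this; exact subset_rfl
    | succ b ihb =>
      intro hb a ha
      rcases Nat.eq_or_lt_of_le ha with h | h
      · subst h; exact subset_rfl
      · exact (ihb (by omega) a (by omega)).trans (step_sub b (by omega))
  rw [hout] at hi
  have hiT : ∀ t ≤ T, i ∉ aset (seq t) := fun t ht h => hi (mono T le_rfl t ht h)
  -- the two sequences coincide
  have heq : ∀ t, t ≤ T → t ≤ T' → seq' t = seq t := by
    intro t
    induction t with
    | zero => intro _ _; rw [h0, h0']
    | succ t ih =>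
      intro h1 h2
      have ht : seq' t = seq t := ih (by omega) (by omega)
      have h3 : List.findSome? (fun r => r n (G \ S) (seq t)) R = some (seq (t + 1)) :=
        findSome?_some_transfer R hinpa G (seq t) (seq (t + 1)) i S
          (hiT t (by omega)) (hiT (t + 1) h1) hS (hstep t (by omega))
      have h4 := hstep' t (by omega)
      rw [ht] at h4
      rw [h3] at h4
      exact (Option.some.injEq _ _ ▸ h4).symm
  -- T = T'
  have hTT : T = T' := by
    by_contra hne
    rcases Nat.lt_or_ge T T' with h | h
    · have h1 : seq' T = seq T := heq T le_rfl (by omega)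
      have h2 := hstep' T h
      rw [h1] at h2
      rw [findSome?_none_transfer R hinpa G (seq T) i S (hiT T le_rfl) hS hhalt] at h2
      exact Option.some_ne_none _ h2.symm
    · have hT' : T' < T := by omega
      have h1 : seq' T' = seq T' := heq T' (by omega) le_rfl
      have h2 : List.findSome? (fun r => r n (G \ S) (seq T')) R = some (seq (T' + 1)) :=
        findSome?_some_transfer R hinpa G (seq T') (seq (T' + 1)) i S
          (hiT T' (by omega)) (hiT (T' + 1) (by omega)) hS (hstep T' hT')
      rw [h1, h2] at hhalt'
      exact Option.some_ne_none _ hhalt'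
  rw [hout, hout', ← hTT]
  exact heq T le_rfl hTT.le

end MaxCGIS
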